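/- For every x ∈ [0,1], the Lebesgue measure of the distal set D_L(x) = {y : lim inf_{n→∞} |Lⁿ(x) - Lⁿ(y)| > 0} is zero. -/

import Mathlib

/-- The first Lüroth digit of `x`: the unique integer `a ≥ 2` with
`1/a < x ≤ 1/(a-1)` (for `x ∈ (0,1]`). -/
noncomputable def lurothDigit (x : ℝ) : ℕ := ⌊1 / x⌋₊ + 1

/-- The Lüroth map on `[0,1]`. -/
noncomputable def lurothMap (x : ℝ) : ℝ :=
  if x = 0 then 0
  else (lurothDigit x : ℝ) * ((lurothDigit x : ℝ) - 1) * x - ((lurothDigit x : ℝ) - 1)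

/-- The Lüroth digit sequence of `x` (0-indexed: `lurothDigitSeq x n = a_{n+1}(x)`). -/
noncomputable def lurothDigitSeq (x : ℝ) (n : ℕ) : ℕ := lurothDigit (lurothMap^[n] x)

/-- The `n`-th term of the Lüroth series associated with the digit sequence `a`. -/
noncomputable def lurothTerm (a : ℕ → ℕ) (n : ℕ) : ℝ :=
  (∏ j ∈ Finset.range n, (1 : ℝ) / ((a j : ℝ) * ((a j : ℝ) - 1))) * (1 / (a n : ℝ))

/-- The value of the Lüroth series with digit sequence `a`. -/
noncomputable def lurothVal (a : ℕ → ℕ) : ℝ := ∑' n, lurothTerm a n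

/-- The finite Lüroth sum `⟨c₁, …, cₙ⟩`. -/
noncomputable def lurothFinSum (c : ℕ → ℕ) (n : ℕ) : ℝ := ∑ k ∈ Finset.range n, lurothTerm c k

/-- The fundamental interval of level `n` with digits `c`. -/
noncomputable def fundamentalInterval (n : ℕ) (c : ℕ → ℕ) : Set ℝ :=
  {x | x ∈ Set.Ioc (0 : ℝ) 1 ∧ ∀ j < n, lurothDigitSeq x j = c j}

open Set MeasureTheory Filter

lemma digit_ge_two {x : ℝ} (hx : x ∈ Set.Ioc (0:ℝ) 1) : 2 ≤ lurothDigit x := by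
  have h1 : (1:ℝ) ≤ 1 / x := by
    rw [le_div_iff₀ hx.1]; simpa using hx.2
  have : 1 ≤ ⌊(1:ℝ)/x⌋₊ := Nat.le_floor (by exact_mod_cast h1)
  have h2 : 1 ≤ ⌊(1:ℝ)/x⌋₊ := Nat.le_floor (by exact_mod_cast h1)
  simp only [lurothDigit]; omega

lemma digit_bounds {x : ℝ} (hx : x ∈ Set.Ioc (0:ℝ) 1) :
    1 / (lurothDigit x : ℝ) < x ∧ x ≤ 1 / ((lurothDigit x : ℝ) - 1) := by
  have hxpos := hx.1
  have h1 : (1:ℝ) ≤ 1 / x := by rw [le_div_iff₀ hxpos]; simpa using hx.2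
  have hfl : (⌊(1:ℝ)/x⌋₊ : ℝ) ≤ 1 / x := Nat.floor_le (by linarith)
  have hfl2 : 1 / x < (⌊(1:ℝ)/x⌋₊ : ℝ) + 1 := Nat.lt_floor_add_one _
  have hd : (lurothDigit x : ℝ) = (⌊(1:ℝ)/x⌋₊ : ℝ) + 1 := by
    simp [lurothDigit]
  have hfpos : (1:ℝ) ≤ (⌊(1:ℝ)/x⌋₊ : ℝ) := by
    exact_mod_cast Nat.le_floor (by exact_mod_cast h1)
  constructor
  · rw [hd, div_lt_iff₀ (by linarith)]
    have hx1 : (1/x) * x = 1 := by field_simp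
    nlinarith [mul_lt_mul_of_pos_right hfl2 hxpos]
  · rw [hd]
    have : (⌊(1:ℝ)/x⌋₊ : ℝ) + 1 - 1 = (⌊(1:ℝ)/x⌋₊ : ℝ) := by ring
    rw [this, le_div_iff₀ (by linarith)]
    calc x * (⌊(1:ℝ)/x⌋₊:ℝ) ≤ x * (1/x) := by
          exact mul_le_mul_of_nonneg_left hfl (le_of_lt hxpos)
    _ = 1 := by field_simp

lemma digit_eq_of_mem {x : ℝ} {k : ℕ} (hk : 2 ≤ k)
    (h1 : 1 / (k:ℝ) < x) (h2 : x ≤ 1 / ((k:ℝ) - 1)) : lurothDigit x = k := by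
  have hk1 : (1:ℝ) ≤ (k:ℝ) - 1 := by
    have : (2:ℝ) ≤ (k:ℝ) := by exact_mod_cast hk
    linarith
  have hkpos : (0:ℝ) < (k:ℝ) := by linarith
  have hxpos : 0 < x := lt_trans (by positivity) h1
  have hle : (k:ℝ) - 1 ≤ 1 / x := by
    rw [le_div_iff₀ hxpos]
    calc ((k:ℝ)-1) * x ≤ ((k:ℝ)-1) * (1/((k:ℝ)-1)) := by
          exact mul_le_mul_of_nonneg_left h2 (by linarith)
    _ = 1 := by field_simp
  have hlt : 1 / x < (k:ℝ) := by
    rw [div_lt_iff₀ hxpos]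
    calc (1:ℝ) = (k:ℝ) * (1/(k:ℝ)) := by field_simp
    _ < (k:ℝ) * x := by exact mul_lt_mul_of_pos_left h1 hkpos
  have : ⌊(1:ℝ)/x⌋₊ = k - 1 := by
    rw [Nat.floor_eq_iff (by positivity)]
    constructor
    · push_cast [Nat.cast_sub (by omega : 1 ≤ k)]; linarith
    · push_cast [Nat.cast_sub (by omega : 1 ≤ k)]; linarith
  simp only [lurothDigit, this]; omega

lemma lurothMap_eq {x : ℝ} (hx : x ≠ 0) :
    lurothMap x = (lurothDigit x : ℝ) * ((lurothDigit x : ℝ) - 1) * x - ((lurothDigit x : ℝ) - 1) := by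
  simp [lurothMap, hx]

lemma lurothMap_mem_Ioc {x : ℝ} (hx : x ∈ Set.Ioc (0:ℝ) 1) : lurothMap x ∈ Set.Ioc (0:ℝ) 1 := by
  have hk := digit_ge_two hx
  have hb := digit_bounds hx
  set k := lurothDigit x with hkdef
  have hk2 : (2:ℝ) ≤ (k:ℝ) := by exact_mod_cast hk
  have hx0 : x ≠ 0 := ne_of_gt hx.1
  rw [lurothMap_eq hx0]
  have h1 : 1 / (k:ℝ) < x := hb.1
  have h2 : x ≤ 1 / ((k:ℝ) - 1) := hb.2
  have hkpos : (0:ℝ) < (k:ℝ) := by linarith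
  have hk1pos : (0:ℝ) < (k:ℝ) - 1 := by linarith
  constructor
  · have : (k:ℝ) * ((k:ℝ)-1) * (1/(k:ℝ)) = (k:ℝ) - 1 := by field_simp
    nlinarith [mul_lt_mul_of_pos_left h1 (by positivity : (0:ℝ) < (k:ℝ)*((k:ℝ)-1))]
  · have : (k:ℝ) * ((k:ℝ)-1) * (1/((k:ℝ)-1)) = (k:ℝ) := by field_simp
    nlinarith [mul_le_mul_of_nonneg_left h2 (by positivity : (0:ℝ) ≤ (k:ℝ)*((k:ℝ)-1))]

lemma iterate_mem_Ioc {x : ℝ} (hx : x ∈ Set.Ioc (0:ℝ) 1) (n : ℕ) :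
    lurothMap^[n] x ∈ Set.Ioc (0:ℝ) 1 := by
  induction n with
  | zero => simpa
  | succ n ih => rw [Function.iterate_succ_apply']; exact lurothMap_mem_Ioc ih

lemma iterate_zero_self (n : ℕ) : lurothMap^[n] (0:ℝ) = 0 := by
  induction n with
  | zero => simp
  | succ n ih => rw [Function.iterate_succ_apply', ih]; simp [lurothMap]

lemma digitSeq_shift (x : ℝ) (n p : ℕ) :
    lurothDigitSeq x (n + p) = lurothDigitSeq (lurothMap^[n] x) p := by
  simp [lurothDigitSeq, add_comm n p, Function.iterate_add_apply]

lemma digitSeq_succ (x : ℝ) (j : ℕ) :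
    lurothDigitSeq x (j + 1) = lurothDigitSeq (lurothMap x) j := by
  rw [show j + 1 = 1 + j by omega, digitSeq_shift x 1 j]
  simp

noncomputable def cylP (c : ℕ → ℕ) (n : ℕ) : ℝ :=
  ∏ j ∈ Finset.range n, 1 / ((c j : ℝ) * ((c j : ℝ) - 1))

lemma cylP_pos {c : ℕ → ℕ} {n : ℕ} (hc : ∀ j < n, 2 ≤ c j) : 0 < cylP c n := by
  apply Finset.prod_pos
  intro j hj
  have := hc j (Finset.mem_range.mp hj)
  have h2 : (2:ℝ) ≤ (c j : ℝ) := by exact_mod_cast this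
  exact one_div_pos.mpr (by nlinarith)

lemma cylP_le_pow {c : ℕ → ℕ} {n : ℕ} (hc : ∀ j < n, 2 ≤ c j) :
    cylP c n ≤ (1/2 : ℝ)^n := by
  rw [show ((1/2:ℝ))^n = ∏ _j ∈ Finset.range n, (1/2:ℝ) by simp]
  apply Finset.prod_le_prod
  · intro j hj
    have h2 : (2:ℝ) ≤ (c j : ℝ) := by exact_mod_cast hc j (Finset.mem_range.mp hj)
    exact le_of_lt (one_div_pos.mpr (by nlinarith))
  · intro j hj
    have h2 : (2:ℝ) ≤ (c j : ℝ) := by exact_mod_cast hc j (Finset.mem_range.mp hj)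
    rw [div_le_div_iff₀ (by nlinarith) (by norm_num)]
    nlinarith

lemma FI_struct (n : ℕ) (c : ℕ → ℕ) (hc : ∀ j < n, 2 ≤ c j) :
    ∃ α : ℝ, 0 ≤ α ∧ α + cylP c n ≤ 1 ∧
      fundamentalInterval n c = Set.Ioc α (α + cylP c n) ∧
      ∀ y ∈ Set.Ioc α (α + cylP c n), lurothMap^[n] y = (y - α) / cylP c n := by
  induction n generalizing c with
  | zero =>
    refine ⟨0, le_refl 0, by simp [cylP], ?_, ?_⟩
    · ext y; simp [fundamentalInterval, cylP]
    · intro y _; simp [cylP]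
  | succ n ih =>
    set k := c 0 with hkdef
    have hk : 2 ≤ k := hc 0 (Nat.succ_pos n)
    have hk2 : (2:ℝ) ≤ (k:ℝ) := by exact_mod_cast hk
    have hkne : ((k:ℝ)) ≠ 0 := by linarith
    have hk1ne : ((k:ℝ) - 1) ≠ 0 := by linarith
    have hfk : (0:ℝ) < (k:ℝ)*((k:ℝ)-1) := by nlinarith
    set c' : ℕ → ℕ := fun j => c (j+1) with hc'def
    have hc' : ∀ j < n, 2 ≤ c' j := fun j hj => hc (j+1) (by omega)
    obtain ⟨α', hα'0, hα'1, hFI', hiter'⟩ := ih c' hc'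
    set P' := cylP c' n with hP'def
    have hP'pos : 0 < P' := cylP_pos hc'
    have hPsucc : cylP c (n+1) = P' * (1/((k:ℝ)*((k:ℝ)-1))) := by
      rw [cylP, Finset.prod_range_succ']
      rfl
    set α : ℝ := α'/((k:ℝ)*((k:ℝ)-1)) + 1/(k:ℝ) with hαdef
    set β : ℝ := (α' + P')/((k:ℝ)*((k:ℝ)-1)) + 1/(k:ℝ) with hβdef
    have hβeq : β = α + cylP c (n+1) := by
      rw [hβdef, hαdef, hPsucc]; field_simp
      ring
    have hmono : ∀ u : ℝ, (k:ℝ)*((k:ℝ)-1) * (u/((k:ℝ)*((k:ℝ)-1)) + 1/(k:ℝ)) - ((k:ℝ)-1) = u := by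
      intro u; field_simp
      ring
    have key_lt : ∀ u y : ℝ, u/((k:ℝ)*((k:ℝ)-1)) + 1/(k:ℝ) < y ↔
        u < (k:ℝ)*((k:ℝ)-1)*y - ((k:ℝ)-1) := by
      intro u y
      constructor
      · intro h; nlinarith [mul_lt_mul_of_pos_left h hfk, hmono u]
      · intro h; by_contra h'; push_neg at h'
        nlinarith [mul_le_mul_of_nonneg_left h' hfk.le, hmono u]
    have key_le : ∀ u y : ℝ, y ≤ u/((k:ℝ)*((k:ℝ)-1)) + 1/(k:ℝ) ↔
        (k:ℝ)*((k:ℝ)-1)*y - ((k:ℝ)-1) ≤ u := by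
      intro u y
      constructor
      · intro h; nlinarith [mul_le_mul_of_nonneg_left h hfk.le, hmono u]
      · intro h; by_contra h'; push_neg at h'
        nlinarith [mul_lt_mul_of_pos_left h' hfk, hmono u]
    have hαpos : (0:ℝ) < α := by
      rw [hαdef]
      have h1 : 0 ≤ α'/((k:ℝ)*((k:ℝ)-1)) := div_nonneg hα'0 hfk.le
      have h2 : (0:ℝ) < 1/(k:ℝ) := by positivity
      linarith
    have hβle : β ≤ 1/((k:ℝ)-1) := by
      rw [show (1:ℝ)/((k:ℝ)-1) = 1/((k:ℝ)*((k:ℝ)-1)) + 1/(k:ℝ) by field_simp; ring]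
      rw [hβdef]
      have h1 : (α' + P')/((k:ℝ)*((k:ℝ)-1)) ≤ 1/((k:ℝ)*((k:ℝ)-1)) :=
        (div_le_div_iff_of_pos_right hfk).mpr hα'1
      linarith
    have hint : ∀ y : ℝ, y ∈ Set.Ioc α β → y ∈ Set.Ioc (1/(k:ℝ)) (1/((k:ℝ)-1)) := by
      intro y hy
      constructor
      · have h1 : 0 ≤ α'/((k:ℝ)*((k:ℝ)-1)) := div_nonneg hα'0 hfk.le
        have := hy.1; rw [hαdef] at this; linarith
      · exact le_trans hy.2 hβle
    have hIoc_sub : Set.Ioc (1/(k:ℝ)) (1/((k:ℝ)-1)) ⊆ Set.Ioc (0:ℝ) 1 := by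
      intro y hy
      constructor
      · calc (0:ℝ) < 1/(k:ℝ) := by positivity
        _ < y := hy.1
      · calc y ≤ 1/((k:ℝ)-1) := hy.2
        _ ≤ 1 := by rw [div_le_one (by linarith)]; linarith
    have hmap : ∀ y : ℝ, y ∈ Set.Ioc (1/(k:ℝ)) (1/((k:ℝ)-1)) →
        lurothMap y = (k:ℝ)*((k:ℝ)-1)*y - ((k:ℝ)-1) := by
      intro y hy
      have hd : lurothDigit y = k := digit_eq_of_mem hk hy.1 hy.2
      have hy0 : y ≠ 0 := by
        have : (0:ℝ) < 1/(k:ℝ) := by positivity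
        exact ne_of_gt (lt_trans this hy.1)
      rw [lurothMap_eq hy0, hd]
    have hmemIocαβ : ∀ y : ℝ, y ∈ Set.Ioc α β ↔
        (y ∈ Set.Ioc (1/(k:ℝ)) (1/((k:ℝ)-1)) ∧
          (k:ℝ)*((k:ℝ)-1)*y - ((k:ℝ)-1) ∈ Set.Ioc α' (α' + P')) := by
      intro y
      constructor
      · intro hy
        refine ⟨hint y hy, ?_, ?_⟩
        · exact (key_lt α' y).mp (by rw [← hαdef]; exact hy.1)
        · exact (key_le (α' + P') y).mp (by rw [← hβdef]; exact hy.2)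
      · rintro ⟨-, h1, h2⟩
        exact ⟨by rw [hαdef]; exact (key_lt α' y).mpr h1,
               by rw [hβdef]; exact (key_le (α' + P') y).mpr h2⟩
    have hdigitIff : ∀ y : ℝ, (y ∈ Set.Ioc (0:ℝ) 1 ∧ lurothDigit y = k) ↔
        y ∈ Set.Ioc (1/(k:ℝ)) (1/((k:ℝ)-1)) := by
      intro y
      constructor
      · rintro ⟨hy01, hd⟩
        have hb := digit_bounds hy01
        rw [hd] at hb
        exact ⟨hb.1, hb.2⟩
      · intro hy
        exact ⟨hIoc_sub hy, digit_eq_of_mem hk hy.1 hy.2⟩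
    have hset : fundamentalInterval (n+1) c = Set.Ioc α β := by
      ext y
      constructor
      · rintro ⟨hy01, hdig⟩
        have hd0 : lurothDigit y = k := hdig 0 (Nat.succ_pos n)
        have hyI : y ∈ Set.Ioc (1/(k:ℝ)) (1/((k:ℝ)-1)) := (hdigitIff y).mp ⟨hy01, hd0⟩
        have hLy : lurothMap y ∈ fundamentalInterval n c' := by
          refine ⟨lurothMap_mem_Ioc hy01, ?_⟩
          intro j hj
          have h := hdig (j+1) (by omega)
          rwa [digitSeq_succ] at h
        rw [hFI'] at hLy
        rw [hmap y hyI] at hLy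
        exact (hmemIocαβ y).mpr ⟨hyI, hLy⟩
      · intro hy
        obtain ⟨hyI, hLy⟩ := (hmemIocαβ y).mp hy
        have hy01 := hIoc_sub hyI
        have hd : lurothDigit y = k := digit_eq_of_mem hk hyI.1 hyI.2
        refine ⟨hy01, ?_⟩
        intro j hj
        match j with
        | 0 => simpa [lurothDigitSeq] using hd
        | j+1 =>
          rw [digitSeq_succ]
          have hmem : lurothMap y ∈ fundamentalInterval n c' := by
            rw [hFI', hmap y hyI]; exact hLy
          exact hmem.2 j (by omega)
    refine ⟨α, le_of_lt hαpos, ?_, ?_, ?_⟩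
    · rw [← hβeq]
      calc β ≤ 1/((k:ℝ)-1) := hβle
      _ ≤ 1 := by rw [div_le_one (by linarith)]; linarith
    · rw [hset, hβeq]
    · intro y hy
      rw [← hβeq] at hy
      obtain ⟨hyI, hLy⟩ := (hmemIocαβ y).mp hy
      rw [Function.iterate_succ_apply, hmap y hyI, hiter' _ hLy, hPsucc,
        div_eq_div_iff (ne_of_gt hP'pos) (by positivity), hαdef]
      field_simp
      ring

lemma measurable_lurothDigit : Measurable lurothDigit := by
  have h1 : Measurable fun x : ℝ => 1 / x := measurable_const.div measurable_id
  exact (Nat.measurable_floor.comp h1).add measurable_const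

lemma measurable_lurothMap : Measurable lurothMap := by
  have hd : Measurable fun x : ℝ => ((lurothDigit x : ℝ)) :=
    measurable_from_top.comp measurable_lurothDigit
  unfold lurothMap
  refine Measurable.ite ?_ measurable_const ?_
  · exact MeasurableSet.singleton 0 |>.congr rfl
  · exact ((hd.mul (hd.sub measurable_const)).mul measurable_id).sub
      (hd.sub measurable_const)

lemma vol_affine_preimage (a P : ℝ) (hP : 0 < P) {S : Set ℝ} :
    MeasureTheory.volume ((fun y => (y - a)/P) ⁻¹' S) =
      ENNReal.ofReal P * MeasureTheory.volume S := by
  have : (fun y : ℝ => (y - a)/P) = (fun z : ℝ => P⁻¹ * z) ∘ (fun y : ℝ => -a + y) := by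
    funext y; simp only [Function.comp_apply, div_eq_inv_mul]; ring
  rw [this, Set.preimage_comp]
  rw [show ((fun y : ℝ => -a + y) ⁻¹' ((fun z : ℝ => P⁻¹ * z) ⁻¹' S)) =
    ((-a) + ·) ⁻¹' ((fun z : ℝ => P⁻¹ * z) ⁻¹' S) from rfl]
  rw [measure_preimage_add]
  rw [Real.volume_preimage_mul_left (by positivity : P⁻¹ ≠ 0)]
  rw [inv_inv, abs_of_pos hP]

lemma measurable_iter (n : ℕ) : Measurable (lurothMap^[n]) :=
  measurable_lurothMap.iterate n

lemma measurable_digitSeq (n : ℕ) : Measurable (lurothDigitSeq · n) :=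
  measurable_lurothDigit.comp (measurable_iter n)

lemma measurableSet_FI (n : ℕ) (c : ℕ → ℕ) : MeasurableSet (fundamentalInterval n c) := by
  have : fundamentalInterval n c =
      Set.Ioc (0:ℝ) 1 ∩ ⋂ j ∈ Finset.range n, {x | lurothDigitSeq x j = c j} := by
    ext y
    simp [fundamentalInterval, Set.mem_iInter]
  rw [this]
  refine measurableSet_Ioc.inter ?_
  refine MeasurableSet.biInter (Set.to_countable _) ?_
  intro j _
  exact measurable_digitSeq j (MeasurableSet.singleton (c j))

/-- Self-similarity: the part of a fundamental interval mapping into `S` has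
measure `cylP c n * volume S`. -/
lemma vol_FI_inter (n : ℕ) (c : ℕ → ℕ) (hc : ∀ j < n, 2 ≤ c j)
    {S : Set ℝ} (hS1 : S ⊆ Set.Ioc (0:ℝ) 1) :
    MeasureTheory.volume {y | y ∈ fundamentalInterval n c ∧ lurothMap^[n] y ∈ S} =
      ENNReal.ofReal (cylP c n) * MeasureTheory.volume S := by
  obtain ⟨α, hα0, hα1, hFI, hiter⟩ := FI_struct n c hc
  have hP : 0 < cylP c n := cylP_pos hc
  have hset : {y | y ∈ fundamentalInterval n c ∧ lurothMap^[n] y ∈ S} =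
      (fun y => (y - α)/cylP c n) ⁻¹' S := by
    ext y
    constructor
    · rintro ⟨hyF, hyS⟩
      have hy : y ∈ Set.Ioc α (α + cylP c n) := by rwa [hFI] at hyF
      simp only [Set.mem_preimage]
      rw [← hiter y hy]
      exact hyS
    · intro hy
      have h01 := hS1 hy
      have hy' : y ∈ Set.Ioc α (α + cylP c n) := by
        simp only [Set.mem_preimage] at hy
        have h1 : 0 < (y - α)/cylP c n := h01.1
        have h2 : (y - α)/cylP c n ≤ 1 := h01.2
        constructor
        · have := (div_pos_iff.mp h1)
          rcases this with ⟨h,_⟩|⟨_,h⟩ <;> linarith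
        · nlinarith [(div_le_one hP).mp h2]
      refine ⟨by rwa [hFI], ?_⟩
      rw [hiter y hy']
      exact hy
  rw [hset, vol_affine_preimage α (cylP c n) hP]

lemma sum_branch_prob (K : ℕ) :
    ∑ i ∈ Finset.range K, (1:ℝ)/(((i:ℝ)+2)*((i:ℝ)+1)) = 1 - 1/((K:ℝ)+1) := by
  induction K with
  | zero => simp
  | succ K ih =>
    rw [Finset.sum_range_succ, ih]
    have h1 : ((K:ℝ)+1) ≠ 0 := by positivity
    have h2 : ((K:ℝ)+2) ≠ 0 := by positivity
    push_cast
    field_simp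
    ring

lemma vol_pullback_le {S : Set ℝ} (hS1 : S ⊆ Set.Ioc (0:ℝ) 1) :
    MeasureTheory.volume {y | y ∈ Set.Ioc (0:ℝ) 1 ∧ lurothMap y ∈ S} ≤
      MeasureTheory.volume S := by
  have hvolS_le : MeasureTheory.volume S ≤ 1 := by
    calc MeasureTheory.volume S ≤ MeasureTheory.volume (Set.Ioc (0:ℝ) 1) :=
      MeasureTheory.measure_mono hS1
    _ = 1 := by simp
  apply ENNReal.le_of_forall_pos_le_add
  intro ε hε _
  obtain ⟨K, hK⟩ := exists_nat_one_div_lt (by exact_mod_cast hε : (0:ℝ) < (ε:ℝ))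
  have hcover : {y | y ∈ Set.Ioc (0:ℝ) 1 ∧ lurothMap y ∈ S} ⊆
      (⋃ i ∈ Finset.range K, {y | y ∈ fundamentalInterval 1 (fun _ => i+2) ∧
        lurothMap^[1] y ∈ S}) ∪ Set.Ioc (0:ℝ) (1/((K:ℝ)+1)) := by
    rintro y ⟨hy01, hyS⟩
    set k := lurothDigit y with hkdef
    have hk2 : 2 ≤ k := digit_ge_two hy01
    by_cases hkK : k ≤ K + 1
    · left
      rw [Set.mem_iUnion]
      refine ⟨k - 2, ?_⟩
      rw [Set.mem_iUnion]
      refine ⟨Finset.mem_range.mpr (by omega), ?_⟩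
      refine ⟨⟨hy01, ?_⟩, by simpa using hyS⟩
      intro j hj
      interval_cases j
      simpa [lurothDigitSeq] using (by omega : k - 2 + 2 = k).symm ▸ rfl
    · right
      have hb := digit_bounds hy01
      refine ⟨hy01.1, ?_⟩
      calc y ≤ 1/((k:ℝ)-1) := hb.2
      _ ≤ 1/((K:ℝ)+1) := by
          apply div_le_div_of_nonneg_left (by norm_num) (by positivity)
          have : (K:ℝ) + 2 ≤ (k:ℝ) := by exact_mod_cast (by omega : K + 2 ≤ k)
          linarith
  calc MeasureTheory.volume {y | y ∈ Set.Ioc (0:ℝ) 1 ∧ lurothMap y ∈ S}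
      ≤ MeasureTheory.volume (⋃ i ∈ Finset.range K,
          {y | y ∈ fundamentalInterval 1 (fun _ => i+2) ∧ lurothMap^[1] y ∈ S}) +
        MeasureTheory.volume (Set.Ioc (0:ℝ) (1/((K:ℝ)+1))) := by
        exact le_trans (MeasureTheory.measure_mono hcover) (MeasureTheory.measure_union_le _ _)
  _ ≤ (∑ i ∈ Finset.range K, MeasureTheory.volume
          {y | y ∈ fundamentalInterval 1 (fun _ => i+2) ∧ lurothMap^[1] y ∈ S}) +
        ENNReal.ofReal (1/((K:ℝ)+1)) := by
        gcongr
        · exact MeasureTheory.measure_biUnion_finset_le _ _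
        · simp [Real.volume_Ioc]
  _ ≤ MeasureTheory.volume S + ↑ε := by
        gcongr
        · have heach : ∀ i ∈ Finset.range K, MeasureTheory.volume
              {y | y ∈ fundamentalInterval 1 (fun _ => i+2) ∧ lurothMap^[1] y ∈ S} =
              ENNReal.ofReal ((1:ℝ)/(((i:ℝ)+2)*((i:ℝ)+1))) * MeasureTheory.volume S := by
            intro i _
            rw [vol_FI_inter 1 (fun _ => i+2) (fun j _ => by show 2 ≤ i+2; omega) hS1]
            congr 2
            simp only [cylP, Finset.prod_range_one]
            push_cast
            congr 1
            ring
          rw [Finset.sum_congr rfl heach, ← Finset.sum_mul]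
          have hsum : ∑ i ∈ Finset.range K, ENNReal.ofReal ((1:ℝ)/(((i:ℝ)+2)*((i:ℝ)+1))) ≤ 1 := by
            rw [← ENNReal.ofReal_sum_of_nonneg (fun i _ => by positivity)]
            rw [sum_branch_prob]
            calc ENNReal.ofReal (1 - 1/((K:ℝ)+1)) ≤ ENNReal.ofReal 1 := by
                  apply ENNReal.ofReal_le_ofReal
                  have : (0:ℝ) < 1/((K:ℝ)+1) := by positivity
                  linarith
            _ = 1 := by simp
          calc (∑ i ∈ Finset.range K, ENNReal.ofReal ((1:ℝ)/(((i:ℝ)+2)*((i:ℝ)+1)))) *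
                MeasureTheory.volume S ≤ 1 * MeasureTheory.volume S := by gcongr
          _ = MeasureTheory.volume S := one_mul _
        · calc ENNReal.ofReal (1/((K:ℝ)+1)) ≤ ENNReal.ofReal (ε:ℝ) :=
                ENNReal.ofReal_le_ofReal (le_of_lt hK)
          _ = ↑ε := ENNReal.ofReal_coe_nnreal

lemma vol_pullback_iter_le (m : ℕ) {S : Set ℝ} (hS1 : S ⊆ Set.Ioc (0:ℝ) 1) :
    MeasureTheory.volume {y | y ∈ Set.Ioc (0:ℝ) 1 ∧ lurothMap^[m] y ∈ S} ≤
      MeasureTheory.volume S := by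
  induction m generalizing S with
  | zero =>
    apply MeasureTheory.measure_mono
    intro y hy; simpa using hy.2
  | succ m ih =>
    have hstep : {y | y ∈ Set.Ioc (0:ℝ) 1 ∧ lurothMap^[m+1] y ∈ S} =
        {y | y ∈ Set.Ioc (0:ℝ) 1 ∧ lurothMap y ∈
          {z | z ∈ Set.Ioc (0:ℝ) 1 ∧ lurothMap^[m] z ∈ S}} := by
      ext y
      simp only [Set.mem_setOf_eq, Function.iterate_succ_apply]
      constructor
      · rintro ⟨h1, h2⟩; exact ⟨h1, lurothMap_mem_Ioc h1, h2⟩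
      · rintro ⟨h1, _, h3⟩; exact ⟨h1, h3⟩
    rw [hstep]
    calc MeasureTheory.volume _ ≤
        MeasureTheory.volume {z | z ∈ Set.Ioc (0:ℝ) 1 ∧ lurothMap^[m] z ∈ S} :=
        vol_pullback_le (fun z hz => hz.1)
    _ ≤ MeasureTheory.volume S := ih hS1

/-- The target digit used to approach the orbit of `x`. -/
noncomputable def targetDigit (K : ℕ) (x : ℝ) (p : ℕ) : ℕ :=
  if 2 ≤ lurothDigitSeq x p ∧ lurothDigitSeq x p < K then lurothDigitSeq x p else K

lemma targetDigit_mem {K : ℕ} (hK : 2 ≤ K) (x : ℝ) (p : ℕ) :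
    2 ≤ targetDigit K x p ∧ targetDigit K x p ≤ K := by
  unfold targetDigit
  split <;> omega

lemma targetDigit_shift (K : ℕ) (x : ℝ) (n p : ℕ) :
    targetDigit K x (n + p) = targetDigit K (lurothMap^[n] x) p := by
  unfold targetDigit
  rw [digitSeq_shift]

/-- The set of `y` that fail to match the target block of `x` at `j*m`
for every `j < J`. -/
def badSet (m K J : ℕ) (x : ℝ) : Set ℝ :=
  {y | y ∈ Set.Ioc (0:ℝ) 1 ∧
    ∀ j < J, ¬ (∀ i < m, lurothDigitSeq y (j*m + i) = targetDigit K x (j*m + i))}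

lemma badSet_subset (m K J : ℕ) (x : ℝ) : badSet m K J x ⊆ Set.Ioc (0:ℝ) 1 :=
  fun _ hy => hy.1

lemma measurableSet_badSet (m K J : ℕ) (x : ℝ) : MeasurableSet (badSet m K J x) := by
  have : badSet m K J x = Set.Ioc (0:ℝ) 1 ∩
      ⋂ j ∈ Finset.range J, (⋂ i ∈ Finset.range m,
        {y | lurothDigitSeq y (j*m + i) = targetDigit K x (j*m + i)})ᶜ := by
    ext y
    simp [badSet, Set.mem_iInter]
  rw [this]
  refine measurableSet_Ioc.inter ?_
  refine MeasurableSet.biInter (Set.to_countable _) fun j _ => ?_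
  refine MeasurableSet.compl ?_
  refine MeasurableSet.biInter (Set.to_countable _) fun i _ => ?_
  exact measurable_digitSeq (j*m+i) (MeasurableSet.singleton _)

lemma cylP_target_ge {K m : ℕ} (hK : 2 ≤ K) (x : ℝ) :
    (1/((K:ℝ)*((K:ℝ)-1)))^m ≤ cylP (targetDigit K x) m := by
  have hK2 : (2:ℝ) ≤ (K:ℝ) := by exact_mod_cast hK
  rw [show ((1/((K:ℝ)*((K:ℝ)-1)))^m) = ∏ _j ∈ Finset.range m, 1/((K:ℝ)*((K:ℝ)-1)) by
    simp]
  apply Finset.prod_le_prod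
  · intro j _
    exact le_of_lt (one_div_pos.mpr (by nlinarith))
  · intro j _
    obtain ⟨h2, hle⟩ := targetDigit_mem hK x j
    have h2' : (2:ℝ) ≤ (targetDigit K x j : ℝ) := by exact_mod_cast h2
    have hle' : (targetDigit K x j : ℝ) ≤ (K:ℝ) := by exact_mod_cast hle
    apply div_le_div_of_nonneg_left (by norm_num) (by nlinarith)
    nlinarith

lemma badSet_succ_eq (m K J : ℕ) (x : ℝ) :
    badSet m K (J+1) x =
      {y | y ∈ Set.Ioc (0:ℝ) 1 ∧ lurothMap^[m] y ∈ badSet m K J (lurothMap^[m] x)} \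
      {y | y ∈ fundamentalInterval m (targetDigit K x) ∧
        lurothMap^[m] y ∈ badSet m K J (lurothMap^[m] x)} := by
  ext y
  simp only [badSet, Set.mem_setOf_eq, Set.mem_diff, fundamentalInterval]
  constructor
  · rintro ⟨hy01, hfail⟩
    have hLm : lurothMap^[m] y ∈ Set.Ioc (0:ℝ) 1 := iterate_mem_Ioc hy01 m
    have hrest : ∀ j < J, ¬ (∀ i < m,
        lurothDigitSeq (lurothMap^[m] y) (j*m + i) =
          targetDigit K (lurothMap^[m] x) (j*m + i)) := by
      intro j hj hcon
      apply hfail (j+1) (by omega)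
      intro i hi
      have := hcon i hi
      rw [← digitSeq_shift, ← targetDigit_shift] at this
      rwa [show m + (j*m+i) = (j+1)*m + i by ring] at this
    refine ⟨⟨hy01, hLm, hrest⟩, ?_⟩
    rintro ⟨⟨_, hdig⟩, -⟩
    apply hfail 0 (by omega)
    intro i hi
    have := hdig i hi
    rwa [show (0:ℕ)*m + i = i by ring]
  · rintro ⟨⟨hy01, hLm, hrest⟩, hnot⟩
    refine ⟨hy01, ?_⟩
    intro j hj
    match j with
    | 0 =>
      intro hcon
      apply hnot
      refine ⟨⟨hy01, ?_⟩, hLm, hrest⟩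
      intro i hi
      have := hcon i hi
      rwa [show (0:ℕ)*m + i = i by ring] at this
    | j+1 =>
      intro hcon
      apply hrest j (by omega)
      intro i hi
      have := hcon i (by omega)
      rw [show (j+1)*m + i = m + (j*m+i) by ring] at this
      rwa [digitSeq_shift, targetDigit_shift] at this

lemma badSet_decay {m K : ℕ} (hK : 2 ≤ K) (J : ℕ) (x : ℝ) :
    MeasureTheory.volume (badSet m K J x) ≤
      ENNReal.ofReal ((1 - (1/((K:ℝ)*((K:ℝ)-1)))^m)^J) := by
  have hK2 : (2:ℝ) ≤ (K:ℝ) := by exact_mod_cast hK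
  have hfK : (0:ℝ) < (K:ℝ)*((K:ℝ)-1) := by nlinarith
  set δ : ℝ := (1/((K:ℝ)*((K:ℝ)-1)))^m with hδdef
  have hδpos : 0 < δ := by positivity
  have hδle : δ ≤ 1 := by
    apply pow_le_one₀ (by positivity)
    rw [div_le_one hfK]; nlinarith
  induction J generalizing x with
  | zero =>
    simp only [pow_zero]
    calc MeasureTheory.volume (badSet m K 0 x) ≤
        MeasureTheory.volume (Set.Ioc (0:ℝ) 1) :=
        MeasureTheory.measure_mono (badSet_subset m K 0 x)
    _ = 1 := by simp
    _ = ENNReal.ofReal 1 := by simp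
  | succ J ih =>
    set x' := lurothMap^[m] x with hx'def
    set B := badSet m K J x' with hBdef
    have hB1 : MeasureTheory.volume B ≤ 1 := by
      calc MeasureTheory.volume B ≤ MeasureTheory.volume (Set.Ioc (0:ℝ) 1) :=
        MeasureTheory.measure_mono (badSet_subset m K J x')
      _ = 1 := by simp
    have hBne : MeasureTheory.volume B ≠ ⊤ :=
      (lt_of_le_of_lt hB1 ENNReal.one_lt_top).ne
    set T := {y | y ∈ Set.Ioc (0:ℝ) 1 ∧ lurothMap^[m] y ∈ B} with hTdef
    set M := {y | y ∈ fundamentalInterval m (targetDigit K x) ∧ lurothMap^[m] y ∈ B}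
      with hMdef
    have hMsubT : M ⊆ T := by
      rintro y ⟨hyF, hyB⟩
      exact ⟨hyF.1, hyB⟩
    have hMmeas : MeasurableSet M := by
      have : M = fundamentalInterval m (targetDigit K x) ∩ (lurothMap^[m]) ⁻¹' B := rfl
      rw [this]
      exact (measurableSet_FI _ _).inter ((measurable_iter m) (measurableSet_badSet _ _ _ _))
    have hTsplit : MeasureTheory.volume (badSet m K (J+1) x) + MeasureTheory.volume M =
        MeasureTheory.volume T := by
      rw [badSet_succ_eq m K J x, ← hx'def, ← hBdef, ← hTdef, ← hMdef]
      rw [← MeasureTheory.measure_diff_add_inter T hMmeas]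
      congr 1
      rw [Set.inter_eq_self_of_subset_right hMsubT]
    have hTle : MeasureTheory.volume T ≤ MeasureTheory.volume B :=
      vol_pullback_iter_le m (badSet_subset m K J x')
    have hMeq : MeasureTheory.volume M =
        ENNReal.ofReal (cylP (targetDigit K x) m) * MeasureTheory.volume B :=
      vol_FI_inter m (targetDigit K x) (fun j _ => (targetDigit_mem hK x j).1)
        (badSet_subset m K J x')
    have hMge : ENNReal.ofReal δ * MeasureTheory.volume B ≤ MeasureTheory.volume M := by
      rw [hMeq]
      exact mul_le_mul_left (ENNReal.ofReal_le_ofReal (cylP_target_ge hK x)) _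
    -- volume bad(J+1) ≤ (1-δ) * volume B
    have hkey : MeasureTheory.volume (badSet m K (J+1) x) ≤
        ENNReal.ofReal (1 - δ) * MeasureTheory.volume B := by
      have hsplit : MeasureTheory.volume B =
          ENNReal.ofReal (1 - δ) * MeasureTheory.volume B +
          ENNReal.ofReal δ * MeasureTheory.volume B := by
        rw [← add_mul, ← ENNReal.ofReal_add (by linarith) (le_of_lt hδpos)]
        norm_num
      have h1 : MeasureTheory.volume (badSet m K (J+1) x) +
          ENNReal.ofReal δ * MeasureTheory.volume B ≤
          ENNReal.ofReal (1 - δ) * MeasureTheory.volume B +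
          ENNReal.ofReal δ * MeasureTheory.volume B := by
        rw [← hsplit]
        calc MeasureTheory.volume (badSet m K (J+1) x) +
            ENNReal.ofReal δ * MeasureTheory.volume B ≤
            MeasureTheory.volume (badSet m K (J+1) x) + MeasureTheory.volume M := by
              gcongr
        _ = MeasureTheory.volume T := hTsplit
        _ ≤ MeasureTheory.volume B := hTle
      have hfin : ENNReal.ofReal δ * MeasureTheory.volume B < ⊤ := by
        apply lt_of_le_of_lt _ ENNReal.one_lt_top
        calc ENNReal.ofReal δ * MeasureTheory.volume B ≤ 1 * 1 := by
              exact mul_le_mul' (ENNReal.ofReal_le_one.mpr hδle) hB1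
        _ = 1 := one_mul 1
      exact ENNReal.le_of_add_le_add_right hfin.ne h1
    calc MeasureTheory.volume (badSet m K (J+1) x) ≤
        ENNReal.ofReal (1 - δ) * MeasureTheory.volume B := hkey
    _ ≤ ENNReal.ofReal (1 - δ) * ENNReal.ofReal ((1 - δ)^J) := by
        gcongr
        exact ih x'
    _ = ENNReal.ofReal ((1 - δ)^(J+1)) := by
        rw [← ENNReal.ofReal_mul (by linarith)]
        congr 1
        ring

lemma mem_Icc_cases {x : ℝ} (hx : x ∈ Set.Icc (0:ℝ) 1) : x = 0 ∨ x ∈ Set.Ioc (0:ℝ) 1 := by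
  rcases eq_or_lt_of_le hx.1 with h | h
  · exact Or.inl h.symm
  · exact Or.inr ⟨h, hx.2⟩

lemma iterate_mem_Icc {x : ℝ} (hx : x ∈ Set.Icc (0:ℝ) 1) (n : ℕ) :
    lurothMap^[n] x ∈ Set.Icc (0:ℝ) 1 := by
  rcases mem_Icc_cases hx with h | h
  · subst h; rw [iterate_zero_self]; exact ⟨le_refl 0, by norm_num⟩
  · exact Set.Ioc_subset_Icc_self (iterate_mem_Ioc h n)

lemma digit_zero : lurothDigit 0 = 1 := by
  simp [lurothDigit]

/-- If `y` matches the target block of `x` at position `q`, the two orbits come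
within `max ((1/2)^m) (1/(K-1))` of each other at some time in the block. -/
lemma match_close {x y : ℝ} (hx : x ∈ Set.Icc (0:ℝ) 1) (hy : y ∈ Set.Ioc (0:ℝ) 1)
    {m K : ℕ} (hm : 1 ≤ m) (hK : 2 ≤ K) (q : ℕ)
    (hmatch : ∀ i < m, lurothDigitSeq y (q+i) = targetDigit K x (q+i)) :
    ∃ p, q ≤ p ∧ p < q + m ∧
      |lurothMap^[p] x - lurothMap^[p] y| ≤ max ((1/2:ℝ)^m) (1/((K:ℝ)-1)) := by
  have hK2 : (2:ℝ) ≤ (K:ℝ) := by exact_mod_cast hK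
  by_cases hall : ∀ i < m, 2 ≤ lurothDigitSeq x (q+i) ∧ lurothDigitSeq x (q+i) < K
  · -- all digits of x in the block are small: y matches them exactly
    have hx0 : x ∈ Set.Ioc (0:ℝ) 1 := by
      rcases mem_Icc_cases hx with h | h
      · exfalso
        have := (hall 0 hm).1
        subst h
        rw [lurothDigitSeq, iterate_zero_self, digit_zero] at this
        omega
      · exact h
    set c : ℕ → ℕ := fun p => lurothDigitSeq x (q+p) with hcdef
    have hc : ∀ j < m, 2 ≤ c j := fun j hj => (hall j hj).1
    obtain ⟨α, hα0, hα1, hFI, -⟩ := FI_struct m c hc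
    have hxF : lurothMap^[q] x ∈ fundamentalInterval m c := by
      refine ⟨iterate_mem_Ioc hx0 q, fun j hj => ?_⟩
      rw [← digitSeq_shift]
    have hyF : lurothMap^[q] y ∈ fundamentalInterval m c := by
      refine ⟨iterate_mem_Ioc hy q, fun j hj => ?_⟩
      rw [← digitSeq_shift]
      rw [hmatch j hj]
      unfold targetDigit
      rw [if_pos (hall j hj)]
    rw [hFI] at hxF hyF
    refine ⟨q, le_refl q, by omega, ?_⟩
    have hP := cylP_le_pow hc
    rw [abs_sub_le_iff]
    constructor
    · apply le_trans _ (le_max_left _ _)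
      have := hxF.2; have := hyF.1; have := hxF.1; have := hyF.2
      linarith
    · apply le_trans _ (le_max_left _ _)
      have := hxF.2; have := hyF.1; have := hxF.1; have := hyF.2
      linarith
  · -- some digit of x in the block is out of range; the target there is K
    push_neg at hall
    obtain ⟨i, hi, hbig⟩ := hall
    refine ⟨q + i, by omega, by omega, ?_⟩
    have hyd : lurothDigitSeq y (q+i) = K := by
      rw [hmatch i hi]
      unfold targetDigit
      rw [if_neg]
      intro hcon
      exact absurd hcon.2 (by intro h; exact absurd (hbig hcon.1) (by omega))
    have hyIoc : lurothMap^[q+i] y ∈ Set.Ioc (0:ℝ) 1 := iterate_mem_Ioc hy (q+i)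
    have hyb := digit_bounds hyIoc
    rw [show lurothDigit (lurothMap^[q+i] y) = lurothDigitSeq y (q+i) from rfl, hyd] at hyb
    have hyub : lurothMap^[q+i] y ≤ 1/((K:ℝ)-1) := hyb.2
    have hypos : 0 < lurothMap^[q+i] y := hyIoc.1
    have hxub : 0 ≤ lurothMap^[q+i] x ∧ lurothMap^[q+i] x ≤ 1/((K:ℝ)-1) := by
      rcases mem_Icc_cases hx with h | h
      · subst h; rw [iterate_zero_self]
        refine ⟨le_refl 0, ?_⟩
        have h1 : (1:ℝ) ≤ (K:ℝ)-1 := by linarith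
        positivity
      · have hxIoc : lurothMap^[q+i] x ∈ Set.Ioc (0:ℝ) 1 := iterate_mem_Ioc h (q+i)
        have hxd2 : 2 ≤ lurothDigitSeq x (q+i) := digit_ge_two hxIoc
        have hxdK : K ≤ lurothDigitSeq x (q+i) := hbig hxd2
        have hxb := digit_bounds hxIoc
        refine ⟨le_of_lt hxIoc.1, le_trans hxb.2 ?_⟩
        apply div_le_div_of_nonneg_left (by norm_num) (by linarith)
        have : (K:ℝ) ≤ (lurothDigitSeq x (q+i) : ℝ) := by exact_mod_cast hxdK
        rw [show lurothDigit (lurothMap^[q+i] x) = lurothDigitSeq x (q+i) from rfl]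
        linarith
    apply le_trans _ (le_max_right ((1/2:ℝ)^m) (1/((K:ℝ)-1)))
    rw [abs_sub_le_iff]
    constructor <;> linarith [hxub.1, hxub.2]

/-- The set of points whose orbit stays `ε`-far from the orbit of `x` forever is null. -/
lemma vol_forever_far_zero {x : ℝ} (hx : x ∈ Set.Icc (0:ℝ) 1) (i : ℕ) :
    MeasureTheory.volume {z | z ∈ Set.Ioc (0:ℝ) 1 ∧
      ∀ n : ℕ, 1/((i:ℝ)+1) ≤ |lurothMap^[n] x - lurothMap^[n] z|} = 0 := by
  set m : ℕ := i + 1 with hmdef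
  set K : ℕ := 2^(i+1) + 1 with hKdef
  have hK : 2 ≤ K := by
    have : 2 ≤ 2^(i+1) := by
      calc 2 = 2^1 := by norm_num
      _ ≤ 2^(i+1) := Nat.pow_le_pow_right (by norm_num) (by omega)
    omega
  have hKcast : ((K:ℝ)) - 1 = 2^(i+1) := by
    rw [hKdef]; push_cast; ring
  have hlt : ((i:ℝ)+1) < 2^(i+1) := by
    exact_mod_cast Nat.lt_two_pow_self (n := i+1)
  have hbound : max ((1/2:ℝ)^m) (1/((K:ℝ)-1)) < 1/((i:ℝ)+1) := by
    rw [max_lt_iff]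
    constructor
    · rw [hmdef, div_pow, one_pow, div_lt_div_iff₀ (by positivity) (by positivity)]
      nlinarith
    · rw [hKcast, div_lt_div_iff₀ (by positivity) (by positivity)]
      nlinarith
  have hsub : ∀ J : ℕ, {z | z ∈ Set.Ioc (0:ℝ) 1 ∧
      ∀ n : ℕ, 1/((i:ℝ)+1) ≤ |lurothMap^[n] x - lurothMap^[n] z|} ⊆ badSet m K J x := by
    intro J z hz
    refine ⟨hz.1, ?_⟩
    intro j _ hcon
    obtain ⟨p, -, -, hp⟩ := match_close hx hz.1 (by omega) hK (j*m) hcon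
    have := hz.2 p
    linarith [lt_of_le_of_lt hp hbound]
  have hδpos : (0:ℝ) < (1/((K:ℝ)*((K:ℝ)-1)))^m := by
    have hK2 : (2:ℝ) ≤ (K:ℝ) := by exact_mod_cast hK
    have : (0:ℝ) < (K:ℝ)*((K:ℝ)-1) := by nlinarith
    positivity
  have hδle : (1/((K:ℝ)*((K:ℝ)-1)))^m ≤ 1 := by
    have hK2 : (2:ℝ) ≤ (K:ℝ) := by exact_mod_cast hK
    apply pow_le_one₀ (le_of_lt (one_div_pos.mpr (by nlinarith)))
    rw [div_le_one (by nlinarith)]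
    nlinarith
  set D : ℝ := 1 - (1/((K:ℝ)*((K:ℝ)-1)))^m with hDdef
  have hD0 : 0 ≤ D := by rw [hDdef]; linarith
  have hD1 : D < 1 := by rw [hDdef]; linarith
  have htend : Filter.Tendsto (fun J : ℕ => ENNReal.ofReal (D^J)) Filter.atTop (nhds 0) := by
    rw [show (0:ENNReal) = ENNReal.ofReal 0 by simp]
    apply ENNReal.tendsto_ofReal
    exact tendsto_pow_atTop_nhds_zero_of_lt_one hD0 hD1
  have hle : ∀ J : ℕ, MeasureTheory.volume {z | z ∈ Set.Ioc (0:ℝ) 1 ∧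
      ∀ n : ℕ, 1/((i:ℝ)+1) ≤ |lurothMap^[n] x - lurothMap^[n] z|} ≤ ENNReal.ofReal (D^J) := by
    intro J
    exact le_trans (MeasureTheory.measure_mono (hsub J)) (badSet_decay hK J x)
  have := ge_of_tendsto htend (Filter.Eventually.of_forall hle)
  exact le_antisymm this zero_le


/-- For every `x ∈ [0,1]`, the distal set
`D_L(x) = {y : liminf |Lⁿ(x) - Lⁿ(y)| > 0}` has Lebesgue measure zero. -/
theorem volume_distalSet_eq_zero (x : ℝ) (hx : x ∈ Set.Icc (0 : ℝ) 1) :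
    MeasureTheory.volume {y | y ∈ Set.Icc (0 : ℝ) 1 ∧
      0 < Filter.atTop.liminf (fun n => |lurothMap^[n] x - lurothMap^[n] y|)} = 0 := by
  set W : ℕ → ℕ → Set ℝ := fun i N => {y | y ∈ Set.Ioc (0:ℝ) 1 ∧
    ∀ n, N ≤ n → 1/((i:ℝ)+1) ≤ |lurothMap^[n] x - lurothMap^[n] y|} with hWdef
  have hWnull : ∀ i N, MeasureTheory.volume (W i N) = 0 := by
    intro i N
    set Z : Set ℝ := {z | z ∈ Set.Ioc (0:ℝ) 1 ∧
      ∀ n : ℕ, 1/((i:ℝ)+1) ≤ |lurothMap^[n] (lurothMap^[N] x) - lurothMap^[n] z|} with hZdef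
    have hZ0 : MeasureTheory.volume Z = 0 := vol_forever_far_zero (iterate_mem_Icc hx N) i
    have hsub : W i N ⊆ {y | y ∈ Set.Ioc (0:ℝ) 1 ∧ lurothMap^[N] y ∈ Z} := by
      rintro y ⟨hy1, hy2⟩
      refine ⟨hy1, iterate_mem_Ioc hy1 N, ?_⟩
      intro n
      rw [← Function.iterate_add_apply, ← Function.iterate_add_apply]
      exact hy2 (n + N) (by omega)
    have := le_trans (MeasureTheory.measure_mono hsub)
      (vol_pullback_iter_le N (fun z hz => hz.1))
    rw [hZ0] at this
    exact le_antisymm this zero_le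
  have hcover : {y | y ∈ Set.Icc (0 : ℝ) 1 ∧
      0 < Filter.atTop.liminf (fun n => |lurothMap^[n] x - lurothMap^[n] y|)} ⊆
      {(0:ℝ)} ∪ ⋃ i, ⋃ N, W i N := by
    rintro y ⟨hy1, hy2⟩
    rcases mem_Icc_cases hy1 with h | h
    · left; simp [h]
    · right
      obtain ⟨i, hi⟩ := exists_nat_one_div_lt hy2
      have hbdd : Filter.IsBoundedUnder (· ≥ ·) Filter.atTop
          (fun n => |lurothMap^[n] x - lurothMap^[n] y|) :=
        Filter.isBoundedUnder_of ⟨0, fun n => abs_nonneg _⟩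
      have hev := Filter.eventually_lt_of_lt_liminf hi hbdd
      obtain ⟨N, hN⟩ := Filter.eventually_atTop.mp hev
      rw [Set.mem_iUnion]
      refine ⟨i, ?_⟩
      rw [Set.mem_iUnion]
      exact ⟨N, h, fun n hn => le_of_lt (hN n hn)⟩
  apply MeasureTheory.measure_mono_null hcover
  rw [MeasureTheory.measure_union_null_iff]
  constructor
  · simp
  · exact MeasureTheory.measure_iUnion_null fun i =>
      MeasureTheory.measure_iUnion_null fun N => hWnull i N
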